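/- Ψ: Ω → Γ is a homeomorphism, where Ψ(x,y) = (1/(x−y), −xy/(x−y)), Ω = (0,1)×(−∞,−1), and Γ is the open triangle with vertices (0,0),(1,0),(0,1). -/

import Mathlib

noncomputable section

open Real

/-- The Gauss map `T x = 1/x - ⌊1/x⌋`. -/
def gauss (x : ℝ) : ℝ := 1 / x - ⌊1 / x⌋

/-- The future of `x₀` at time `n`: `xₙ = Tⁿ x₀`. -/
def fut (x₀ : ℝ) (n : ℕ) : ℝ := gauss^[n] x₀

/-- The `n`-th partial quotient (digit) of `x₀` (meaningful for `n ≥ 1`):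
`aₙ = ⌊1/xₙ₋₁⌋`. -/
def digit (x₀ : ℝ) (n : ℕ) : ℤ := ⌊1 / fut x₀ (n - 1)⌋

/-- Numerators of the continued fraction convergents of `x₀ ∈ (0,1)`. -/
def num (x₀ : ℝ) : ℕ → ℤ
  | 0 => 0
  | 1 => 1
  | (n + 2) => digit x₀ (n + 2) * num x₀ (n + 1) + num x₀ n

/-- Denominators of the continued fraction convergents of `x₀ ∈ (0,1)`. -/
def den (x₀ : ℝ) : ℕ → ℤ
  | 0 => 1
  | 1 => digit x₀ 1
  | (n + 2) => digit x₀ (n + 2) * den x₀ (n + 1) + den x₀ n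

/-- The `n`-th approximation coefficient `θₙ = qₙ² |x₀ - pₙ/qₙ|`. -/
def theta (x₀ : ℝ) (n : ℕ) : ℝ :=
  (den x₀ n : ℝ) ^ 2 * |x₀ - (num x₀ n : ℝ) / (den x₀ n : ℝ)|

/-- Finite continued fraction `[b₁,...,bₖ] = 1/(b₁ + 1/(⋯ + 1/bₖ))`, with `[∅] = 0`. -/
def fcf : List ℝ → ℝ
  | [] => 0
  | (b :: bs) => 1 / (b + fcf bs)

/-- The past of `x₀` at time `n ≥ 1`: `yₙ = -aₙ - [aₙ₋₁, aₙ₋₂, ..., a₁]`. -/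
def past (x₀ : ℝ) (n : ℕ) : ℝ :=
  -(digit x₀ n : ℝ) -
    fcf (((List.range (n - 1)).map fun i => ((digit x₀ (n - 1 - i) : ℤ) : ℝ)))

/-- The domain `Ω = (0,1) × (-∞,-1)`. -/
def Omega : Set (ℝ × ℝ) := Set.Ioo (0 : ℝ) 1 ×ˢ Set.Iio (-1 : ℝ)

/-- The open triangle `Γ` with vertices `(0,0)`, `(1,0)`, `(0,1)`. -/
def Gam : Set (ℝ × ℝ) := {p | 0 < p.1 ∧ 0 < p.2 ∧ p.1 + p.2 < 1}

/-- The map `Ψ(x,y) = (1/(x-y), -xy/(x-y))`. -/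
def Psi (p : ℝ × ℝ) : ℝ × ℝ := (1 / (p.1 - p.2), -(p.1 * p.2) / (p.1 - p.2))

/-- The map `Φ(u,v) = ((1-√(1-4uv))/(2u), -(1+√(1-4uv))/(2u))`. -/
def Phi (p : ℝ × ℝ) : ℝ × ℝ :=
  ((1 - Real.sqrt (1 - 4 * p.1 * p.2)) / (2 * p.1),
   -((1 + Real.sqrt (1 - 4 * p.1 * p.2)) / (2 * p.1)))

/-- The natural extension map `𝒯(x,y) = (1/x - ⌊1/x⌋, 1/y - ⌊1/x⌋)`. -/
def natExt (p : ℝ × ℝ) : ℝ × ℝ := (1 / p.1 - ⌊1 / p.1⌋, 1 / p.2 - ⌊1 / p.1⌋)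


lemma psi_mem : ∀ p ∈ Omega, Psi p ∈ Gam := by
  rintro ⟨x, y⟩ ⟨⟨hx0, hx1⟩, hy⟩
  simp only [Set.mem_Iio] at hy
  have hd : (0:ℝ) < x - y := by linarith
  refine ⟨?_, ?_, ?_⟩
  · show 0 < 1 / (x - y); positivity
  · show 0 < -(x * y) / (x - y); exact div_pos (by nlinarith) hd
  · show 1 / (x - y) + -(x * y) / (x - y) < 1
    rw [← add_div, div_lt_one hd]
    nlinarith

lemma gam_facts {u v : ℝ} (h : (u, v) ∈ Gam) :
    0 ≤ Real.sqrt (1 - 4 * u * v) ∧ Real.sqrt (1 - 4 * u * v) ^ 2 = 1 - 4 * u * v := by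
  obtain ⟨hu, hv, huv⟩ := h
  refine ⟨Real.sqrt_nonneg _, Real.sq_sqrt ?_⟩
  nlinarith [sq_nonneg (u - v), sq_nonneg (u + v)]

lemma phi_mem : ∀ p ∈ Gam, Phi p ∈ Omega := by
  rintro ⟨u, v⟩ hG
  obtain ⟨hs0, hs2⟩ := gam_facts hG
  obtain ⟨hu, hv, huv⟩ := hG
  simp only at hu hv huv
  simp only [Phi]
  set s := Real.sqrt (1 - 4 * u * v) with hs
  have hs1 : s < 1 := by nlinarith
  have hlo : 2 * u - 1 < s := by nlinarith [sq_nonneg (s - (2 * u - 1))]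
  have hhi : 1 - 2 * u < s := by nlinarith [sq_nonneg (s - (1 - 2 * u))]
  refine ⟨⟨?_, ?_⟩, ?_⟩
  · exact div_pos (by linarith) (by linarith)
  · show (1 - s) / (2 * u) < 1
    rw [div_lt_one (by linarith)]; linarith
  · show -((1 + s) / (2 * u)) < -1
    rw [neg_lt_neg_iff, lt_div_iff₀ (by linarith)]
    linarith

lemma phi_psi : ∀ p ∈ Omega, Phi (Psi p) = p := by
  rintro ⟨x, y⟩ ⟨⟨hx0, hx1⟩, hy⟩
  simp only [Set.mem_Iio] at hy
  have hd : (0:ℝ) < x - y := by linarith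
  have hxy : x + y < 0 := by linarith
  have hsq : 1 - 4 * (1 / (x - y)) * (-(x * y) / (x - y)) = (-(x + y) / (x - y)) ^ 2 := by
    field_simp; ring
  simp only [Phi, Psi]
  rw [hsq, Real.sqrt_sq (div_nonneg (by linarith) hd.le)]
  refine Prod.ext ?_ ?_ <;> dsimp only <;> field_simp <;> ring

lemma psi_phi : ∀ p ∈ Gam, Psi (Phi p) = p := by
  rintro ⟨u, v⟩ hG
  obtain ⟨hs0, hs2⟩ := gam_facts hG
  obtain ⟨hu, hv, huv⟩ := hG
  simp only at hu hv huv
  simp only [Phi, Psi]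
  set s := Real.sqrt (1 - 4 * u * v) with hs
  have hune : u ≠ 0 := ne_of_gt hu
  have hdiff : (1 - s) / (2 * u) - -((1 + s) / (2 * u)) = 1 / u := by
    rw [sub_neg_eq_add, ← add_div, show 1 - s + (1 + s) = (2:ℝ) by ring, ← div_div]
    norm_num
  refine Prod.ext ?_ ?_ <;> dsimp only <;> rw [hdiff]
  · rw [one_div_one_div]
  · rw [div_eq_iff (by positivity : (1:ℝ) / u ≠ 0)]
    field_simp
    nlinarith

lemma cont_psi : Continuous fun p : Omega => Psi (p : ℝ × ℝ) := by
  show Continuous (Set.restrict Omega Psi)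
  apply ContinuousOn.restrict
  rintro ⟨x, y⟩ ⟨⟨hx0, hx1⟩, hy⟩
  simp only [Set.mem_Iio] at hy
  have hd : x - y ≠ 0 := by intro h; linarith [sub_eq_zero.mp h ▸ hy]
  apply ContinuousAt.continuousWithinAt
  apply ContinuousAt.prodMk
  · exact ContinuousAt.div continuousAt_const (by fun_prop) hd
  · exact ContinuousAt.div (by fun_prop) (by fun_prop) hd

lemma cont_phi : Continuous fun p : Gam => Phi (p : ℝ × ℝ) := by
  show Continuous (Set.restrict Gam Phi)
  apply ContinuousOn.restrict
  rintro ⟨u, v⟩ ⟨hu, hv, huv⟩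
  simp only at hu
  have h2u : 2 * u ≠ 0 := by positivity
  apply ContinuousAt.continuousWithinAt
  have hsc : ContinuousAt (fun p : ℝ × ℝ => Real.sqrt (1 - 4 * p.1 * p.2)) (u, v) :=
    (Real.continuous_sqrt.comp (by fun_prop)).continuousAt
  apply ContinuousAt.prodMk
  · exact ContinuousAt.div (ContinuousAt.sub continuousAt_const hsc) (by fun_prop) h2u
  · exact ContinuousAt.neg
      (ContinuousAt.div (ContinuousAt.add continuousAt_const hsc) (by fun_prop) h2u)

theorem stmt13 : ∃ h : Omega ≃ₜ Gam, ∀ p : Omega, (h p : ℝ × ℝ) = Psi p := by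
  refine ⟨{ toFun := fun p => ⟨Psi p, psi_mem p p.2⟩
            invFun := fun q => ⟨Phi q, phi_mem q q.2⟩
            left_inv := fun p => Subtype.ext (phi_psi p p.2)
            right_inv := fun q => Subtype.ext (psi_phi q q.2)
            continuous_toFun := cont_psi.subtype_mk _
            continuous_invFun := cont_phi.subtype_mk _ }, fun p => rfl⟩
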